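/- Let M be an invertible 2×2 real matrix with inverse entries (M⁻¹)_{11} = m₁₁, (M⁻¹)_{12} = m₁₂, (M⁻¹)_{21} = m₂₁, (M⁻¹)_{22} = m₂₂, and let θ be a real random variable with Gaussian distribution of mean μ and variance v > 0. Then the entries of the matrix E[(T_θ M T_θᵀ)⁻¹] are: entry (1,1) equals (m₁₁(1 + cos(2μ)e^{-2v}) + m₂₂(1 - cos(2μ)e^{-2v}) - (m₁₂ + m₂₁) sin(2μ)e^{-2v})/2; entry (1,2) equals (m₁₂(1 + cos(2μ)e^{-2v}) - m₂₁(1 - cos(2μ)e^{-2v}) + (m₁₁ - m₂₂) sin(2μ)e^{-2v})/2; entry (2,1) equals (m₂₁(1 + cos(2μ)e^{-2v}) - m₁₂(1 - cos(2μ)e^{-2v}) + (m₁₁ - m₂₂) sin(2μ)e^{-2v})/2; entry (2,2) equals (m₂₂(1 + cos(2μ)e^{-2v}) + m₁₁(1 - cos(2μ)e^{-2v}) + (m₁₂ + m₂₁) sin(2μ)e^{-2v})/2. -/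

import Mathlib

open MeasureTheory ProbabilityTheory Real NNReal Matrix Complex

section AuxGauss

lemma my_gauss_cexp (μ : ℝ) (V : ℝ) (hV : 0 < V) :
    ∫ x : ℝ, (gaussianPDFReal μ ⟨V, hV.le⟩ x : ℂ) * Complex.exp (2 * x * I) =
      Complex.exp (2 * μ * I - 2 * V) := by
  set b : ℂ := -(1 / (2 * (V : ℂ))) with hb
  have hbre : b.re < 0 := by
    simp [hb, div_eq_mul_inv, Complex.inv_re, Complex.normSq_ofReal]
    positivity
  set c : ℂ := μ / V + 2 * I with hc
  set d : ℂ := -(μ ^ 2) / (2 * V) with hd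
  have hVc : (V : ℂ) ≠ 0 := by exact_mod_cast hV.ne'
  have key : ∀ x : ℝ, (gaussianPDFReal μ ⟨V, hV.le⟩ x : ℂ) * Complex.exp (2 * x * I)
      = (√(2 * π * V))⁻¹ • Complex.exp (b * x ^ 2 + c * x + d) := by
    intro x
    rw [show gaussianPDFReal μ ⟨V, hV.le⟩ x = (√(2 * π * V))⁻¹ * Real.exp (-(x - μ) ^ 2 / (2 * V)) from rfl]
    have harg : b * x ^ 2 + c * x + d = ((- (x - μ)^2 / (2 * V) : ℝ) : ℂ) + 2 * x * I := by
      simp only [hb, hc, hd]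
      push_cast
      field_simp
      ring
    rw [harg, Complex.exp_add, ← Complex.ofReal_exp, Complex.real_smul]
    push_cast
    ring
  simp_rw [key]
  rw [integral_smul, integral_cexp_quadratic hbre c d]
  have h1 : ((π : ℂ) / -b) = ((2 * π * V : ℝ) : ℂ) := by
    rw [hb]; push_cast; field_simp
  have h2 : ((π : ℂ) / -b) ^ (1/2 : ℂ) = ((√(2 * π * V) : ℝ) : ℂ) := by
    rw [h1, show ((1:ℂ)/2) = ((1/2 : ℝ) : ℂ) by norm_num,
      ← Complex.ofReal_cpow (by positivity), Real.sqrt_eq_rpow]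
  have h3 : d - c ^ 2 / (4 * b) = 2 * μ * I - 2 * V := by
    simp only [hb, hc, hd]
    field_simp
    ring_nf
    simp [Complex.I_sq]
    ring
  rw [h2, h3, Complex.real_smul, ← mul_assoc, ← Complex.ofReal_mul,
    inv_mul_cancel₀ (by positivity : √(2 * π * V) ≠ 0)]
  simp

lemma my_gauss_integrable_cexp (μ : ℝ) (V : ℝ) (hV : 0 < V) :
    Integrable (fun x : ℝ => (gaussianPDFReal μ ⟨V, hV.le⟩ x : ℂ) * Complex.exp (2 * x * I)) := by
  set b : ℂ := -(1 / (2 * (V : ℂ))) with hb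
  have hbre : b.re < 0 := by
    simp [hb, div_eq_mul_inv, Complex.inv_re, Complex.normSq_ofReal]
    positivity
  set c : ℂ := μ / V + 2 * I with hc
  set d : ℂ := -(μ ^ 2) / (2 * V) with hd
  have hVc : (V : ℂ) ≠ 0 := by exact_mod_cast hV.ne'
  have key : ∀ x : ℝ, (gaussianPDFReal μ ⟨V, hV.le⟩ x : ℂ) * Complex.exp (2 * x * I)
      = (√(2 * π * V))⁻¹ • Complex.exp (b * x ^ 2 + c * x + d) := by
    intro x
    rw [show gaussianPDFReal μ ⟨V, hV.le⟩ x = (√(2 * π * V))⁻¹ * Real.exp (-(x - μ) ^ 2 / (2 * V)) from rfl]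
    have harg : b * x ^ 2 + c * x + d = ((- (x - μ)^2 / (2 * V) : ℝ) : ℂ) + 2 * x * I := by
      simp only [hb, hc, hd]
      push_cast
      field_simp
      ring
    rw [harg, Complex.exp_add, ← Complex.ofReal_exp, Complex.real_smul]
    push_cast
    ring
  simp_rw [key]
  exact (integrable_cexp_quadratic' hbre c d).smul ((√(2 * π * V))⁻¹ : ℝ)

lemma my_gauss_integral_eq (μ : ℝ) {v : ℝ≥0} (hv : v ≠ 0) (f : ℝ → ℝ) :
    ∫ x, f x ∂(gaussianReal μ v) = ∫ x, gaussianPDFReal μ v x * f x := by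
  rw [gaussianReal_of_var_ne_zero μ hv]
  have h : (gaussianPDF μ v) = fun x => ((gaussianPDFReal μ v x).toNNReal : ENNReal) := rfl
  rw [h, integral_withDensity_eq_integral_smul
    (by exact (measurable_gaussianPDFReal μ v).real_toNNReal)]
  congr 1; ext x
  rw [NNReal.smul_def, smul_eq_mul, Real.coe_toNNReal _ (gaussianPDFReal_nonneg μ v x)]

lemma my_gauss_cos (μ : ℝ) {v : ℝ≥0} (hv : 0 < v) :
    ∫ x, Real.cos (2 * x) ∂(gaussianReal μ v) = Real.cos (2 * μ) * Real.exp (-2 * v) := by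
  have hV : (0:ℝ) < v := hv
  have hveq : v = ⟨(v:ℝ), hV.le⟩ := rfl
  rw [my_gauss_integral_eq μ hv.ne']
  have : ∀ x : ℝ, gaussianPDFReal μ v x * Real.cos (2 * x)
      = ((gaussianPDFReal μ ⟨(v:ℝ), hV.le⟩ x : ℂ) * Complex.exp (2 * x * I)).re := by
    intro x
    rw [show ((2 : ℂ) * x * I) = ((2*x : ℝ) : ℂ) * I by push_cast; ring]
    rw [Complex.re_ofReal_mul, Complex.exp_ofReal_mul_I_re, ← hveq]
  simp_rw [this]
  have hint := integral_re (my_gauss_integrable_cexp μ (v:ℝ) hV)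
  simp only [RCLike.re_to_complex] at hint
  rw [hint, my_gauss_cexp μ v hV,
    show ((2:ℂ) * μ * I - 2 * v) = ((-2*(v:ℝ) : ℝ):ℂ) + ((2*μ:ℝ):ℂ) * I by push_cast; ring,
    Complex.exp_add, ← Complex.ofReal_exp, Complex.re_ofReal_mul, Complex.exp_ofReal_mul_I_re]
  ring

lemma my_gauss_sin (μ : ℝ) {v : ℝ≥0} (hv : 0 < v) :
    ∫ x, Real.sin (2 * x) ∂(gaussianReal μ v) = Real.sin (2 * μ) * Real.exp (-2 * v) := by
  have hV : (0:ℝ) < v := hv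
  have hveq : v = ⟨(v:ℝ), hV.le⟩ := rfl
  rw [my_gauss_integral_eq μ hv.ne']
  have : ∀ x : ℝ, gaussianPDFReal μ v x * Real.sin (2 * x)
      = ((gaussianPDFReal μ ⟨(v:ℝ), hV.le⟩ x : ℂ) * Complex.exp (2 * x * I)).im := by
    intro x
    rw [show ((2 : ℂ) * x * I) = ((2*x : ℝ) : ℂ) * I by push_cast; ring]
    rw [Complex.im_ofReal_mul, Complex.exp_ofReal_mul_I_im, ← hveq]
  simp_rw [this]
  have hint := integral_im (my_gauss_integrable_cexp μ (v:ℝ) hV)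
  simp only [RCLike.im_to_complex] at hint
  rw [hint, my_gauss_cexp μ v hV,
    show ((2:ℂ) * μ * I - 2 * v) = ((-2*(v:ℝ) : ℝ):ℂ) + ((2*μ:ℝ):ℂ) * I by push_cast; ring,
    Complex.exp_add, ← Complex.ofReal_exp, Complex.im_ofReal_mul, Complex.exp_ofReal_mul_I_im]
  ring

lemma my_gauss_affine (μ : ℝ) {v : ℝ≥0} (hv : 0 < v) (a b c : ℝ) :
    ∫ θ, (a + b * Real.cos (2*θ) + c * Real.sin (2*θ)) ∂(gaussianReal μ v)
      = a + b * (Real.cos (2*μ) * Real.exp (-2*(v:ℝ)))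
          + c * (Real.sin (2*μ) * Real.exp (-2*(v:ℝ))) := by
  have hcos : Integrable (fun θ : ℝ => Real.cos (2*θ)) (gaussianReal μ v) := by
    refine Integrable.mono' (integrable_const 1)
      ((Real.continuous_cos.comp (continuous_const.mul continuous_id)).aestronglyMeasurable) ?_
    filter_upwards with θ
    rw [Real.norm_eq_abs]
    exact Real.abs_cos_le_one _
  have hsin : Integrable (fun θ : ℝ => Real.sin (2*θ)) (gaussianReal μ v) := by
    refine Integrable.mono' (integrable_const 1)
      ((Real.continuous_sin.comp (continuous_const.mul continuous_id)).aestronglyMeasurable) ?_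
    filter_upwards with θ
    rw [Real.norm_eq_abs]
    exact Real.abs_sin_le_one _
  have hab : Integrable (fun θ : ℝ => a + b * Real.cos (2*θ)) (gaussianReal μ v) :=
    (integrable_const a).add (hcos.const_mul b)
  rw [integral_add hab (hsin.const_mul c),
    integral_add (integrable_const a) (hcos.const_mul b),
    integral_const, integral_const_mul, integral_const_mul,
    my_gauss_cos μ hv, my_gauss_sin μ hv]
  simp [measure_univ]

end AuxGauss

/-- The 2×2 rotation matrix by angle `θ`. -/
noncomputable def rotMat (θ : ℝ) : Matrix (Fin 2) (Fin 2) ℝ :=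
  !![Real.cos θ, -Real.sin θ; Real.sin θ, Real.cos θ]

lemma my_rot_congr_inv (M : Matrix (Fin 2) (Fin 2) ℝ) (θ : ℝ) :
    (rotMat θ * M * (rotMat θ)ᵀ)⁻¹ = rotMat θ * M⁻¹ * (rotMat θ)ᵀ := by
  have h1 : rotMat θ * (rotMat θ)ᵀ = 1 := by
    ext i j
    fin_cases i <;> fin_cases j <;>
      simp only [rotMat, Matrix.mul_apply, Matrix.transpose_apply, Fin.sum_univ_two,
        Matrix.of_apply, Matrix.cons_val_zero, Matrix.cons_val_one, Matrix.head_cons, Matrix.cons_val',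
        Matrix.empty_val', Matrix.cons_val_fin_one, Matrix.head_fin_const, Matrix.one_apply,
        Fin.isValue, Fin.zero_eta, Fin.mk_one, ne_eq, ite_true, ite_false, if_true, if_false,
        reduceIte] <;>
      norm_num <;>
      nlinarith [Real.sin_sq_add_cos_sq θ]
  have h2 : (rotMat θ)ᵀ * rotMat θ = 1 := by
    ext i j
    fin_cases i <;> fin_cases j <;>
      simp only [rotMat, Matrix.mul_apply, Matrix.transpose_apply, Fin.sum_univ_two,
        Matrix.of_apply, Matrix.cons_val_zero, Matrix.cons_val_one, Matrix.head_cons, Matrix.cons_val',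
        Matrix.empty_val', Matrix.cons_val_fin_one, Matrix.head_fin_const, Matrix.one_apply,
        Fin.isValue, Fin.zero_eta, Fin.mk_one, ne_eq, ite_true, ite_false, if_true, if_false,
        reduceIte] <;>
      norm_num <;>
      nlinarith [Real.sin_sq_add_cos_sq θ]
  rw [Matrix.mul_inv_rev, Matrix.mul_inv_rev, Matrix.inv_eq_right_inv h2,
    Matrix.inv_eq_right_inv h1, mul_assoc]

theorem gaussian_expectation_rot_congruence_inv_entries
    (M : Matrix (Fin 2) (Fin 2) ℝ) (hM : IsUnit M.det)
    (μ : ℝ) (v : ℝ≥0) (hv : 0 < v)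
    (m11 m12 m21 m22 : ℝ)
    (h11 : M⁻¹ 0 0 = m11) (h12 : M⁻¹ 0 1 = m12)
    (h21 : M⁻¹ 1 0 = m21) (h22 : M⁻¹ 1 1 = m22) :
    (∫ θ, (rotMat θ * M * (rotMat θ)ᵀ)⁻¹ 0 0 ∂(gaussianReal μ v)
        = (m11 * (1 + Real.cos (2 * μ) * Real.exp (-2 * (v : ℝ)))
            + m22 * (1 - Real.cos (2 * μ) * Real.exp (-2 * (v : ℝ)))
            - (m12 + m21) * (Real.sin (2 * μ) * Real.exp (-2 * (v : ℝ)))) / 2) ∧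
    (∫ θ, (rotMat θ * M * (rotMat θ)ᵀ)⁻¹ 0 1 ∂(gaussianReal μ v)
        = (m12 * (1 + Real.cos (2 * μ) * Real.exp (-2 * (v : ℝ)))
            - m21 * (1 - Real.cos (2 * μ) * Real.exp (-2 * (v : ℝ)))
            + (m11 - m22) * (Real.sin (2 * μ) * Real.exp (-2 * (v : ℝ)))) / 2) ∧
    (∫ θ, (rotMat θ * M * (rotMat θ)ᵀ)⁻¹ 1 0 ∂(gaussianReal μ v)
        = (m21 * (1 + Real.cos (2 * μ) * Real.exp (-2 * (v : ℝ)))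
            - m12 * (1 - Real.cos (2 * μ) * Real.exp (-2 * (v : ℝ)))
            + (m11 - m22) * (Real.sin (2 * μ) * Real.exp (-2 * (v : ℝ)))) / 2) ∧
    (∫ θ, (rotMat θ * M * (rotMat θ)ᵀ)⁻¹ 1 1 ∂(gaussianReal μ v)
        = (m22 * (1 + Real.cos (2 * μ) * Real.exp (-2 * (v : ℝ)))
            + m11 * (1 - Real.cos (2 * μ) * Real.exp (-2 * (v : ℝ)))
            + (m12 + m21) * (Real.sin (2 * μ) * Real.exp (-2 * (v : ℝ)))) / 2) := by
  have hentry : ∀ (i j : Fin 2) (a b c : ℝ),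
      (∀ θ : ℝ, (rotMat θ * M * (rotMat θ)ᵀ)⁻¹ i j
        = a + b * Real.cos (2*θ) + c * Real.sin (2*θ)) →
      ∫ θ, (rotMat θ * M * (rotMat θ)ᵀ)⁻¹ i j ∂(gaussianReal μ v)
        = a + b * (Real.cos (2*μ) * Real.exp (-2*(v:ℝ)))
            + c * (Real.sin (2*μ) * Real.exp (-2*(v:ℝ))) := by
    intro i j a b c hfun
    rw [integral_congr_ae (Filter.Eventually.of_forall hfun), my_gauss_affine μ hv a b c]
  refine ⟨?_, ?_, ?_, ?_⟩
  · rw [hentry 0 0 ((m11+m22)/2) ((m11-m22)/2) (-(m12+m21)/2) ?_]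
    · ring
    intro θ
    rw [my_rot_congr_inv]
    simp only [rotMat, Matrix.mul_apply, Matrix.transpose_apply, Fin.sum_univ_two,
      Matrix.of_apply, Matrix.cons_val_zero, Matrix.cons_val_one, Matrix.head_cons,
      Matrix.cons_val', Matrix.empty_val', Matrix.cons_val_fin_one, Matrix.head_fin_const,
      Fin.isValue, h11, h12, h21, h22]
    rw [Real.cos_two_mul, Real.sin_two_mul]
    linear_combination m22 * (Real.sin_sq_add_cos_sq θ)
  · rw [hentry 0 1 ((m12-m21)/2) ((m12+m21)/2) ((m11-m22)/2) ?_]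
    · ring
    intro θ
    rw [my_rot_congr_inv]
    simp only [rotMat, Matrix.mul_apply, Matrix.transpose_apply, Fin.sum_univ_two,
      Matrix.of_apply, Matrix.cons_val_zero, Matrix.cons_val_one, Matrix.head_cons,
      Matrix.cons_val', Matrix.empty_val', Matrix.cons_val_fin_one, Matrix.head_fin_const,
      Fin.isValue, h11, h12, h21, h22]
    rw [Real.cos_two_mul, Real.sin_two_mul]
    linear_combination (-m21) * (Real.sin_sq_add_cos_sq θ)
  · rw [hentry 1 0 ((m21-m12)/2) ((m12+m21)/2) ((m11-m22)/2) ?_]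
    · ring
    intro θ
    rw [my_rot_congr_inv]
    simp only [rotMat, Matrix.mul_apply, Matrix.transpose_apply, Fin.sum_univ_two,
      Matrix.of_apply, Matrix.cons_val_zero, Matrix.cons_val_one, Matrix.head_cons,
      Matrix.cons_val', Matrix.empty_val', Matrix.cons_val_fin_one, Matrix.head_fin_const,
      Fin.isValue, h11, h12, h21, h22]
    rw [Real.cos_two_mul, Real.sin_two_mul]
    linear_combination (-m12) * (Real.sin_sq_add_cos_sq θ)
  · rw [hentry 1 1 ((m11+m22)/2) ((m22-m11)/2) ((m12+m21)/2) ?_]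
    · ring
    intro θ
    rw [my_rot_congr_inv]
    simp only [rotMat, Matrix.mul_apply, Matrix.transpose_apply, Fin.sum_univ_two,
      Matrix.of_apply, Matrix.cons_val_zero, Matrix.cons_val_one, Matrix.head_cons,
      Matrix.cons_val', Matrix.empty_val', Matrix.cons_val_fin_one, Matrix.head_fin_const,
      Fin.isValue, h11, h12, h21, h22]
    rw [Real.cos_two_mul, Real.sin_two_mul]
    linear_combination m11 * (Real.sin_sq_add_cos_sq θ)
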